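/- For every μ ∈ ℂ and every η ∈ ℂ the following two power-series identities hold: ∑_{n=0}^∞ ((μ − 2n)/n!)·((−(μ+1)/4)_n/((1/2)_n))·η^{2n} = μ·M(−(μ+1)/4, 1/2, η²) + (μ+1)·η²·M((3−μ)/4, 3/2, η²), and η + (1/4)·∑_{n=1}^∞ ((2n+1−μ)/n!)·(((5−μ)/4)_{n−1}/((3/2)_n))·η^{2n+1} = η·M((1−μ)/4, 3/2, η²) + (η³/3)·M((5−μ)/4, 5/2, η²). -/

import Mathlib

open Complex

/-- Rising Pochhammer symbol in `ℂ`. -/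
noncomputable def pochC (x : ℂ) (n : ℕ) : ℂ := ∏ i ∈ Finset.range n, (x + (i : ℂ))

/-- Kummer's confluent hypergeometric function of the first kind. -/
noncomputable def kummerM (a c ζ : ℂ) : ℂ :=
  ∑' n : ℕ, pochC a n / pochC c n * ζ ^ n / (n.factorial : ℂ)

lemma pochC_zero (x : ℂ) : pochC x 0 = 1 := by simp [pochC]

lemma pochC_succ (x : ℂ) (n : ℕ) : pochC x (n+1) = pochC x n * (x + n) :=
  Finset.prod_range_succ _ _

lemma pochC_succ' (x : ℂ) (n : ℕ) : pochC x (n+1) = x * pochC (x+1) n := by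
  unfold pochC
  rw [Finset.prod_range_succ']
  rw [mul_comm]
  congr 1
  · simp
  · exact Finset.prod_congr rfl (fun i _ => by push_cast; ring)

lemma pos_add_nat_ne (r : ℝ) (hr : 0 < r) (i : ℕ) : (r : ℂ) + i ≠ 0 := by
  rw [← Complex.ofReal_natCast, ← Complex.ofReal_add, Complex.ofReal_ne_zero]
  positivity

lemma pochC_ne_zero (x : ℂ) (hx : ∀ i : ℕ, x + i ≠ 0) (n : ℕ) : pochC x n ≠ 0 :=
  Finset.prod_ne_zero_iff.mpr (fun i _ => hx i)

lemma summable_kummer (a c ζ : ℂ) (hc : ∀ i : ℕ, c + i ≠ 0) :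
    Summable (fun n : ℕ => pochC a n / pochC c n * ζ ^ n / (n.factorial : ℂ)) := by
  set f : ℕ → ℂ := fun n => pochC a n / pochC c n * ζ ^ n / (n.factorial : ℂ) with hf
  apply summable_of_ratio_norm_eventually_le (r := 1/2) (by norm_num)
  have key : ∀ n : ℕ, f (n+1) = f n * ((a + n) * ζ / ((c + n) * ((n : ℂ) + 1))) := by
    intro n
    have h1 : pochC c n ≠ 0 := pochC_ne_zero c hc n
    have h2 : c + n ≠ 0 := hc n
    have h3 : ((n.factorial : ℂ)) ≠ 0 := by exact_mod_cast Nat.factorial_ne_zero n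
    have h4 : ((n : ℂ) + 1) ≠ 0 := Nat.cast_add_one_ne_zero n
    simp only [hf, pochC_succ, pow_succ, Nat.factorial_succ]
    push_cast
    field_simp
  rw [Filter.eventually_atTop]
  refine ⟨⌈2*‖a‖ + 2*‖c‖ + 8*‖ζ‖⌉₊ + 1, fun n hn => ?_⟩
  have hn' : 2*‖a‖ + 2*‖c‖ + 8*‖ζ‖ ≤ n := by
    calc 2*‖a‖ + 2*‖c‖ + 8*‖ζ‖ ≤ (⌈2*‖a‖ + 2*‖c‖ + 8*‖ζ‖⌉₊ : ℝ) := Nat.le_ceil _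
    _ ≤ n := by exact_mod_cast Nat.le_of_succ_le hn
  have ha : 0 ≤ ‖a‖ := norm_nonneg _
  have hcn : 0 ≤ ‖c‖ := norm_nonneg _
  have hz : 0 ≤ ‖ζ‖ := norm_nonneg _
  have hn0 : (1:ℝ) ≤ n := by
    have : 1 ≤ n := Nat.one_le_iff_ne_zero.mpr (by omega)
    exact_mod_cast this
  have hb1 : ‖a + (n:ℂ)‖ ≤ ‖a‖ + n := by
    simpa using norm_add_le a (n:ℂ)
  have hb2 : (n:ℝ) - ‖c‖ ≤ ‖c + (n:ℂ)‖ := by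
    have := norm_sub_norm_le ((n:ℂ)) (-c)
    simp only [norm_neg, sub_neg_eq_add] at this
    calc (n:ℝ) - ‖c‖ = ‖(n:ℂ)‖ - ‖c‖ := by simp
    _ ≤ ‖(n:ℂ) + c‖ := this
    _ = ‖c + (n:ℂ)‖ := by rw [add_comm]
  rw [key n]
  rw [norm_mul]
  rw [mul_comm ((1:ℝ)/2) _]
  apply mul_le_mul_of_nonneg_left _ (norm_nonneg (f n))
  rw [norm_div, norm_mul, norm_mul]
  have hnorm1 : ‖((n:ℂ) + 1)‖ = (n:ℝ) + 1 := by
    rw [show ((n:ℂ)+1) = ((n+1 : ℕ) : ℂ) by push_cast; ring, Complex.norm_natCast]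
    push_cast; ring
  rw [hnorm1]
  have hden : 0 < ‖c + (n:ℂ)‖ * ((n:ℝ) + 1) := by
    apply mul_pos
    · have : (0:ℝ) < (n:ℝ) - ‖c‖ := by nlinarith
      linarith
    · linarith
  rw [div_le_iff₀ hden]
  calc ‖a + (n:ℂ)‖ * ‖ζ‖ ≤ (‖a‖ + n) * ‖ζ‖ := by
        apply mul_le_mul_of_nonneg_right hb1 hz
  _ ≤ 1/2 * (((n:ℝ) - ‖c‖) * ((n:ℝ)+1)) := by nlinarith
  _ ≤ 1/2 * (‖c + (n:ℂ)‖ * ((n:ℝ)+1)) := by nlinarith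


lemma halfC_ne : ∀ i : ℕ, (1/2 : ℂ) + i ≠ 0 := fun i => by
  have := pos_add_nat_ne (1/2) (by norm_num) i
  push_cast at this; exact this

lemma threehalfC_ne : ∀ i : ℕ, (3/2 : ℂ) + i ≠ 0 := fun i => by
  have := pos_add_nat_ne (3/2) (by norm_num) i
  push_cast at this; exact this

lemma fivehalfC_ne : ∀ i : ℕ, (5/2 : ℂ) + i ≠ 0 := fun i => by
  have := pos_add_nat_ne (5/2) (by norm_num) i
  push_cast at this; exact this

lemma term1 (μ η : ℂ) (n : ℕ) :
    (μ - 2 * ((n + 1 : ℕ) : ℂ)) / ((n+1).factorial : ℂ)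
        * (pochC (-(μ + 1) / 4) (n+1) / pochC (1 / 2) (n+1)) * η ^ (2 * (n+1))
      = μ * (pochC (-(μ + 1) / 4) (n+1) / pochC (1 / 2) (n+1) * (η^2) ^ (n+1) / ((n+1).factorial : ℂ))
        + (μ + 1) * η ^ 2 * (pochC ((3 - μ) / 4) n / pochC (3 / 2) n * (η^2) ^ n / (n.factorial : ℂ)) := by
  have e1 : pochC (-(μ+1)/4) (n+1) = (-(μ+1)/4) * pochC ((3-μ)/4) n := by
    rw [pochC_succ']; congr 2; ring
  have e2 : pochC (1/2 : ℂ) (n+1) = (1/2) * pochC (3/2 : ℂ) n := by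
    rw [pochC_succ']; norm_num
  have h1 : pochC (3/2 : ℂ) n ≠ 0 := pochC_ne_zero _ threehalfC_ne n
  have h3 : ((n.factorial : ℂ)) ≠ 0 := by exact_mod_cast Nat.factorial_ne_zero n
  have h4 : ((n : ℂ) + 1) ≠ 0 := Nat.cast_add_one_ne_zero n
  rw [e1, e2, Nat.factorial_succ]
  push_cast
  field_simp
  ring

lemma term2 (μ η : ℂ) (n : ℕ) :
    (1/4 : ℂ) * ((2 * ((n : ℂ) + 1) + 1 - μ) / ((n + 1).factorial : ℂ)
          * (pochC ((5 - μ) / 4) n / pochC (3 / 2) (n + 1)) * η ^ (2 * (n + 1) + 1))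
      = η * (pochC ((1 - μ) / 4) (n+1) / pochC (3 / 2) (n+1) * (η^2) ^ (n+1) / ((n+1).factorial : ℂ))
        + η ^ 3 / 3 * (pochC ((5 - μ) / 4) n / pochC (5 / 2) n * (η^2) ^ n / (n.factorial : ℂ)) := by
  have e1 : pochC ((1-μ)/4) (n+1) = ((1-μ)/4) * pochC ((5-μ)/4) n := by
    rw [pochC_succ']; congr 2; ring
  have e2 : pochC (3/2 : ℂ) (n+1) = (3/2) * pochC (5/2 : ℂ) n := by
    rw [pochC_succ']; norm_num
  have h1 : pochC (5/2 : ℂ) n ≠ 0 := pochC_ne_zero _ fivehalfC_ne n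
  have h3 : ((n.factorial : ℂ)) ≠ 0 := by exact_mod_cast Nat.factorial_ne_zero n
  have h4 : ((n : ℂ) + 1) ≠ 0 := Nat.cast_add_one_ne_zero n
  rw [e1, e2, Nat.factorial_succ]
  push_cast
  field_simp
  ring

set_option maxHeartbeats 1000000 in
theorem statement4 (μ η : ℂ) :
    (∑' n : ℕ, (μ - 2 * (n : ℂ)) / (n.factorial : ℂ)
        * (pochC (-(μ + 1) / 4) n / pochC (1 / 2) n) * η ^ (2 * n)
      = μ * kummerM (-(μ + 1) / 4) (1 / 2) (η ^ 2)
        + (μ + 1) * η ^ 2 * kummerM ((3 - μ) / 4) (3 / 2) (η ^ 2)) ∧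
    (η + (1 / 4) * ∑' n : ℕ,
        (2 * ((n : ℂ) + 1) + 1 - μ) / ((n + 1).factorial : ℂ)
          * (pochC ((5 - μ) / 4) n / pochC (3 / 2) (n + 1)) * η ^ (2 * (n + 1) + 1)
      = η * kummerM ((1 - μ) / 4) (3 / 2) (η ^ 2)
        + η ^ 3 / 3 * kummerM ((5 - μ) / 4) (5 / 2) (η ^ 2)) := by
  constructor
  · have hA : Summable (fun n : ℕ => pochC (-(μ+1)/4) n / pochC (1/2) n * (η^2)^n / (n.factorial : ℂ)) :=
      summable_kummer _ _ _ halfC_ne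
    have hB : Summable (fun n : ℕ => pochC ((3-μ)/4) n / pochC (3/2) n * (η^2)^n / (n.factorial : ℂ)) :=
      summable_kummer _ _ _ threehalfC_ne
    have hA' : Summable (fun n : ℕ => pochC (-(μ+1)/4) (n+1) / pochC (1/2) (n+1) * (η^2)^(n+1) / ((n+1).factorial : ℂ)) :=
      (summable_nat_add_iff 1).mpr hA
    have hFs : Summable (fun n : ℕ => (μ - 2 * ((n + 1 : ℕ) : ℂ)) / ((n+1).factorial : ℂ)
        * (pochC (-(μ + 1) / 4) (n+1) / pochC (1 / 2) (n+1)) * η ^ (2 * (n+1))) :=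
      ((hA'.mul_left μ).add (hB.mul_left ((μ+1)*η^2))).congr (fun n => (term1 μ η n).symm)
    have hF : Summable (fun n : ℕ => (μ - 2 * (n : ℂ)) / (n.factorial : ℂ)
        * (pochC (-(μ + 1) / 4) n / pochC (1 / 2) n) * η ^ (2 * n)) :=
      (summable_nat_add_iff 1).mp hFs
    simp only [kummerM]
    rw [Summable.tsum_eq_zero_add hF, Summable.tsum_eq_zero_add hA]
    have h0 : ∀ n : ℕ, (μ - 2 * (((n+1) : ℕ) : ℂ)) / (((n+1)).factorial : ℂ)
        * (pochC (-(μ + 1) / 4) (n+1) / pochC (1 / 2) (n+1)) * η ^ (2 * (n+1))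
        = μ * (pochC (-(μ+1)/4) (n+1) / pochC (1/2) (n+1) * (η^2)^(n+1) / ((n+1).factorial : ℂ))
          + (μ+1)*η^2 * (pochC ((3-μ)/4) n / pochC (3/2) n * (η^2)^n / (n.factorial : ℂ)) :=
      term1 μ η
    rw [tsum_congr h0, Summable.tsum_add (hA'.mul_left μ) (hB.mul_left ((μ+1)*η^2)),
        tsum_mul_left, tsum_mul_left]
    simp [pochC_zero]
    ring
  · have hT2 : Summable (fun n : ℕ => pochC ((1-μ)/4) n / pochC (3/2) n * (η^2)^n / (n.factorial : ℂ)) :=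
      summable_kummer _ _ _ threehalfC_ne
    have hT3 : Summable (fun n : ℕ => pochC ((5-μ)/4) n / pochC (5/2) n * (η^2)^n / (n.factorial : ℂ)) :=
      summable_kummer _ _ _ fivehalfC_ne
    have hT2' : Summable (fun n : ℕ => pochC ((1-μ)/4) (n+1) / pochC (3/2) (n+1) * (η^2)^(n+1) / ((n+1).factorial : ℂ)) :=
      (summable_nat_add_iff 1).mpr hT2
    have hG : Summable (fun n : ℕ => (1/4 : ℂ) * ((2 * ((n : ℂ) + 1) + 1 - μ) / ((n + 1).factorial : ℂ)
          * (pochC ((5 - μ) / 4) n / pochC (3 / 2) (n + 1)) * η ^ (2 * (n + 1) + 1))) :=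
      ((hT2'.mul_left η).add (hT3.mul_left (η^3/3))).congr (fun n => (term2 μ η n).symm)
    simp only [kummerM]
    rw [Summable.tsum_eq_zero_add hT2]
    rw [show (1/4 : ℂ) * (∑' n : ℕ, (2 * ((n : ℂ) + 1) + 1 - μ) / ((n + 1).factorial : ℂ)
          * (pochC ((5 - μ) / 4) n / pochC (3 / 2) (n + 1)) * η ^ (2 * (n + 1) + 1))
        = ∑' n : ℕ, (1/4 : ℂ) * ((2 * ((n : ℂ) + 1) + 1 - μ) / ((n + 1).factorial : ℂ)
          * (pochC ((5 - μ) / 4) n / pochC (3 / 2) (n + 1)) * η ^ (2 * (n + 1) + 1)) from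
      (tsum_mul_left).symm]
    rw [tsum_congr (term2 μ η), Summable.tsum_add (hT2'.mul_left η) (hT3.mul_left (η^3/3)),
        tsum_mul_left, tsum_mul_left]
    simp [pochC_zero]
    ring
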